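/- Let N be a Poisson(λ) random variable with λ > 0. For every real K ≥ 1 and every real M ≥ max(2λe, 1), P(N ≥ M K) ≤ K^{−M K}. -/

import Mathlib

open MeasureTheory ProbabilityTheory
open scoped ENNReal NNReal

/-- Auxiliary: `λ^n / n! ≤ (λ e / n)^n`, from `n^n ≤ e^n * n!`. -/
lemma aux_pmf_bound (lam : NNReal) (n : ℕ) (hn : 0 < n) :
    (lam : ℝ) ^ n / n.factorial ≤ ((lam : ℝ) * Real.exp 1 / n) ^ n := by
  have hnpos : (0 : ℝ) < n := by exact_mod_cast hn
  have h1 : (n : ℝ) ^ n / n.factorial ≤ Real.exp n :=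
    Real.pow_div_factorial_le_exp (n : ℝ) (Nat.cast_nonneg n) n
  have hfac : (0 : ℝ) < n.factorial := by exact_mod_cast n.factorial_pos
  have hexp : Real.exp (n : ℝ) = Real.exp 1 ^ n := by
    rw [← Real.exp_nat_mul]; ring_nf
  have key : (n : ℝ) ^ n ≤ Real.exp 1 ^ n * n.factorial := by
    rw [div_le_iff₀ hfac] at h1
    calc (n : ℝ) ^ n ≤ Real.exp n * n.factorial := h1
      _ = Real.exp 1 ^ n * n.factorial := by rw [hexp]
  rw [div_pow, mul_pow, div_le_div_iff₀ hfac (by positivity)]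
  calc (lam : ℝ) ^ n * (n : ℝ) ^ n ≤ (lam : ℝ) ^ n * (Real.exp 1 ^ n * n.factorial) := by
        exact mul_le_mul_of_nonneg_left key (by positivity)
    _ = (lam : ℝ) ^ n * Real.exp 1 ^ n * n.factorial := by ring

/-- If `N ~ Poisson(λ)` with `λ > 0`, then for every real `K ≥ 1` and every real
`M ≥ max(2λe, 1)`, `P(N ≥ M K) ≤ K^{-M K}`. -/
theorem poisson_tail_bound {Ω : Type*} [MeasurableSpace Ω] (P : Measure Ω)
    [IsProbabilityMeasure P] (lam : NNReal) (hlam : 0 < lam) (N : Ω → ℕ)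
    (hmeas : Measurable N) (hpois : Measure.map N P = poissonMeasure lam)
    (K M : ℝ) (hK : 1 ≤ K) (hM : max (2 * lam * Real.exp 1) 1 ≤ M) :
    P {ω | M * K ≤ (N ω : ℝ)} ≤ ENNReal.ofReal (K ^ (-(M * K))) := by
  have hlamR : (0 : ℝ) < lam := by exact_mod_cast hlam
  have hM1 : (1 : ℝ) ≤ M := le_trans (le_max_right _ _) hM
  have hM2 : 2 * (lam : ℝ) * Real.exp 1 ≤ M := le_trans (le_max_left _ _) hM
  have hK0 : (0 : ℝ) < K := lt_of_lt_of_le one_pos hK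
  have hMK1 : (1 : ℝ) ≤ M * K := by nlinarith
  set n₀ : ℕ := ⌈M * K⌉₊ with hn₀
  have hMKn₀ : M * K ≤ n₀ := Nat.le_ceil _
  have hn₀1 : 1 ≤ n₀ := by
    rw [hn₀, Nat.one_le_ceil_iff]; linarith
  have hset : {ω | M * K ≤ (N ω : ℝ)} = N ⁻¹' (Set.Ici n₀) := by
    ext ω
    simp only [Set.mem_setOf_eq, Set.mem_preimage, Set.mem_Ici]
    rw [← Nat.ceil_le]
  rw [hset, ← Measure.map_apply hmeas measurableSet_Ici, hpois]
  have hPo : poissonMeasure lam (Set.Ici n₀) = ∑' n, (Set.Ici n₀).indicator (poissonPMF lam) n := by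
    rw [poissonMeasure, Measure.sum_apply _ measurableSet_Ici]
    congr 1; ext n
    rw [Measure.smul_apply, Measure.dirac_apply' _ measurableSet_Ici, smul_eq_mul]
    by_cases h : n ∈ Set.Ici n₀
    · simp only [Set.indicator_of_mem h, Pi.one_apply, mul_one]; rfl
    · simp only [Set.indicator_of_notMem h, mul_zero]
  rw [hPo]
  set r : ℝ≥0∞ := ENNReal.ofReal (2 * K)⁻¹ with hr
  have hterm : ∀ n : ℕ, (Set.Ici n₀).indicator (poissonPMF lam) n ≤
      (Set.Ici n₀).indicator (fun n => r ^ n) n := by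
    intro n
    apply Set.indicator_le_indicator'
    intro hn
    have hn0 : 0 < n := lt_of_lt_of_le hn₀1 hn
    have hnR : M * K ≤ (n : ℝ) := le_trans hMKn₀ (by exact_mod_cast hn)
    have hnpos : (0 : ℝ) < n := by exact_mod_cast hn0
    have h2lK : 2 * (lam : ℝ) * Real.exp 1 * K ≤ n := by
      calc 2 * (lam : ℝ) * Real.exp 1 * K ≤ M * K :=
            mul_le_mul_of_nonneg_right hM2 hK0.le
        _ ≤ n := hnR
    have hratio : (lam : ℝ) * Real.exp 1 / n ≤ (2 * K)⁻¹ := by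
      rw [div_le_iff₀ hnpos]
      calc (lam : ℝ) * Real.exp 1 = (2 * K)⁻¹ * (2 * lam * Real.exp 1 * K) := by
            field_simp
        _ ≤ (2 * K)⁻¹ * n := mul_le_mul_of_nonneg_left h2lK (by positivity)
    have hpmf : poissonPMFReal lam n ≤ (2 * K)⁻¹ ^ n := by
      have hfac : (0 : ℝ) < n.factorial := by exact_mod_cast n.factorial_pos
      have h1 : poissonPMFReal lam n ≤ (lam : ℝ) ^ n / n.factorial := by
        rw [poissonPMFReal]
        have hexple : Real.exp (-(lam : ℝ)) ≤ 1 := Real.exp_le_one_iff.mpr (by linarith)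
        calc Real.exp (-(lam : ℝ)) * (lam : ℝ) ^ n / n.factorial
            ≤ 1 * (lam : ℝ) ^ n / n.factorial := by gcongr
          _ = (lam : ℝ) ^ n / n.factorial := by ring
      calc poissonPMFReal lam n ≤ (lam : ℝ) ^ n / n.factorial := h1
        _ ≤ ((lam : ℝ) * Real.exp 1 / n) ^ n := aux_pmf_bound lam n hn0
        _ ≤ (2 * K)⁻¹ ^ n := pow_le_pow_left₀ (by positivity) hratio n
    show (poissonPMF lam) n ≤ r ^ n
    have hcoe : (poissonPMF lam) n = ENNReal.ofReal (poissonPMFReal lam n) := rfl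
    rw [hcoe, hr, ← ENNReal.ofReal_pow (by positivity)]
    exact ENNReal.ofReal_le_ofReal hpmf
  calc ∑' n, (Set.Ici n₀).indicator (poissonPMF lam) n
      ≤ ∑' n, (Set.Ici n₀).indicator (fun n => r ^ n) n := ENNReal.tsum_le_tsum hterm
    _ = ∑' n, r ^ (n + n₀) := by
        rw [← Summable.sum_add_tsum_nat_add' (f := fun n => (Set.Ici n₀).indicator (fun n => r ^ n) n)
          (k := n₀) ENNReal.summable]
        have h0 : ∀ i ∈ Finset.range n₀, (Set.Ici n₀).indicator (fun n => r ^ n) i = 0 := by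
          intro i hi
          rw [Set.indicator_of_notMem]
          simp only [Set.mem_Ici, not_le]
          exact Finset.mem_range.mp hi
        rw [Finset.sum_congr rfl h0]
        simp only [Finset.sum_const_zero, zero_add]
        congr 1
        ext i
        rw [Set.indicator_of_mem (by simp : i + n₀ ∈ Set.Ici n₀)]
    _ = r ^ n₀ * (1 - r)⁻¹ := by
        simp only [pow_add, ENNReal.tsum_mul_right, ENNReal.tsum_geometric]
        ring
    _ ≤ r ^ n₀ * 2 := by
        apply mul_le_mul_right
        have hr2 : r ≤ 2⁻¹ := by
          rw [hr]
          calc ENNReal.ofReal (2 * K)⁻¹ ≤ ENNReal.ofReal 2⁻¹ := by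
                apply ENNReal.ofReal_le_ofReal
                exact inv_anti₀ (by norm_num) (by linarith)
            _ = 2⁻¹ := by
                rw [ENNReal.ofReal_inv_of_pos (by norm_num)]
                norm_num
        calc (1 - r)⁻¹ ≤ (1 - 2⁻¹)⁻¹ := ENNReal.inv_le_inv' (tsub_le_tsub_left hr2 1)
          _ = 2 := by rw [ENNReal.one_sub_inv_two, inv_inv]
    _ ≤ ENNReal.ofReal (K ^ (-(M * K))) := by
        rw [hr, ← ENNReal.ofReal_pow (by positivity)]
        have h2 : (2 : ℝ≥0∞) = ENNReal.ofReal 2 := by norm_num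
        rw [h2, ← ENNReal.ofReal_mul (by positivity)]
        apply ENNReal.ofReal_le_ofReal
        have ha : (2 : ℝ)⁻¹ ^ n₀ * 2 ≤ 1 := by
          have h : (2 : ℝ)⁻¹ ^ n₀ ≤ 2⁻¹ := by
            calc (2 : ℝ)⁻¹ ^ n₀ ≤ 2⁻¹ ^ 1 :=
                  pow_le_pow_of_le_one (by norm_num) (by norm_num) hn₀1
              _ = 2⁻¹ := pow_one _
          linarith
        have hb : (K : ℝ)⁻¹ ^ n₀ ≤ K ^ (-(M * K)) := by
          have h1 : (K : ℝ)⁻¹ ^ n₀ = K ^ (-(n₀ : ℝ)) := by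
            rw [Real.rpow_neg hK0.le, Real.rpow_natCast, inv_pow]
          rw [h1]
          exact Real.rpow_le_rpow_of_exponent_le hK (by linarith)
        calc (2 * K)⁻¹ ^ n₀ * 2 = ((2 : ℝ)⁻¹ ^ n₀ * 2) * (K : ℝ)⁻¹ ^ n₀ := by
              rw [mul_inv, mul_pow]; ring
          _ ≤ 1 * (K ^ (-(M * K))) := by
              apply mul_le_mul ha hb (by positivity) zero_le_one
          _ = K ^ (-(M * K)) := one_mul _
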